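/- Let G and H be finite simple graphs, let k = ω(I(H)) and ℓ = ω(I(G)), where I(·) denotes the isolation graph and ω the clique number. Then ι(G □ H) ≤ min{α_k(G)·ι(H) + (n(G) − α_k(G))·γ(H), α_ℓ(H)·ι(G) + (n(H) − α_ℓ(H))·γ(G)}, where α_k(G) denotes the maximum cardinality of a set of vertices inducing a k-colorable subgraph of G and n(G) denotes the order of G. -/

import Mathlib

/-- The closed neighborhood `N[A]` of a set of vertices. -/
def closedNbhd {V : Type*} (G : SimpleGraph V) (A : Set V) : Set V :=
  {v | v ∈ A ∨ ∃ a ∈ A, G.Adj a v}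

/-- A set of vertices is independent if it contains no edge. -/
def IndepSet {V : Type*} (G : SimpleGraph V) (S : Set V) : Prop :=
  ∀ u ∈ S, ∀ v ∈ S, ¬ G.Adj u v

/-- `A` is isolating if the vertices outside `N[A]` form an independent set. -/
def IsIsolating {V : Type*} (G : SimpleGraph V) (A : Set V) : Prop :=
  IndepSet G (closedNbhd G A)ᶜ

/-- The isolation number `ι(G)`. -/
noncomputable def isolationNum {V : Type*} (G : SimpleGraph V) : ℕ :=
  sInf {n | ∃ A : Set V, IsIsolating G A ∧ A.ncard = n}

/-- `D` is a dominating set if `N[D] = V(G)`. -/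
def IsDominating {V : Type*} (G : SimpleGraph V) (D : Set V) : Prop :=
  closedNbhd G D = Set.univ

/-- The domination number `γ(G)`. -/
noncomputable def dominationNum {V : Type*} (G : SimpleGraph V) : ℕ :=
  sInf {n | ∃ D : Set V, IsDominating G D ∧ D.ncard = n}
/-- The independence number `α(G)`. -/
noncomputable def indepNum {V : Type*} (G : SimpleGraph V) : ℕ :=
  sSup {n | ∃ S : Set V, IndepSet G S ∧ S.ncard = n}

/-- A vertex cover: a set of vertices meeting every edge. -/
def IsVertexCover {V : Type*} (G : SimpleGraph V) (B : Set V) : Prop :=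
  ∀ u v, G.Adj u v → u ∈ B ∨ v ∈ B

/-- The vertex cover number `β(G)`. -/
noncomputable def vertexCoverNum {V : Type*} (G : SimpleGraph V) : ℕ :=
  sInf {n | ∃ B : Set V, IsVertexCover G B ∧ B.ncard = n}
/-- The set of vertices outside `N[A]`. -/
def leftoverSet {V : Type*} (G : SimpleGraph V) (A : Set V) : Set V :=
  (closedNbhd G A)ᶜ

/-- The vertices of the isolation graph: the `ι(G)`-sets. -/
def IotaSets (V : Type*) (G : SimpleGraph V) : Type _ :=
  {A : Set V // IsIsolating G A ∧ A.ncard = isolationNum G}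

/-- The isolation graph `I(G)`: vertices are the `ι(G)`-sets, two distinct such sets
`A`, `B` being adjacent whenever `L_A ∩ L_B = ∅`. -/
def isolationGraph {V : Type*} (G : SimpleGraph V) : SimpleGraph (IotaSets V G) where
  Adj A B := A ≠ B ∧ leftoverSet G A.1 ∩ leftoverSet G B.1 = ∅
  symm := ⟨fun A B h => ⟨h.1.symm, by rw [Set.inter_comm]; exact h.2⟩⟩
  loopless := ⟨fun A h => h.1 rfl⟩

/-- The clique number `ω(G)`. -/
noncomputable def cliqueNumber {W : Type*} (G : SimpleGraph W) : ℕ :=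
  sSup {n | ∃ S : Set W, (∀ u ∈ S, ∀ v ∈ S, u ≠ v → G.Adj u v) ∧ S.ncard = n}

/-- `α_k(G)`: the maximum number of vertices inducing a `k`-colorable subgraph of `G`. -/
noncomputable def alphaK {V : Type*} (G : SimpleGraph V) (k : ℕ) : ℕ :=
  sSup {n | ∃ S : Set V,
    (∃ c : V → Fin k, ∀ u ∈ S, ∀ v ∈ S, G.Adj u v → c u ≠ c v) ∧ S.ncard = n}

/-! ### Auxiliary lemmas -/

lemma exists_iota_set {V : Type*} (G : SimpleGraph V) :
    ∃ A : Set V, IsIsolating G A ∧ A.ncard = isolationNum G := by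
  have hne : {n | ∃ A : Set V, IsIsolating G A ∧ A.ncard = n}.Nonempty :=
    ⟨(Set.univ : Set V).ncard, Set.univ, fun u hu => absurd (Or.inl (Set.mem_univ u)) hu, rfl⟩
  exact Nat.sInf_mem hne

lemma exists_dom_set {V : Type*} (G : SimpleGraph V) :
    ∃ D : Set V, IsDominating G D ∧ D.ncard = dominationNum G := by
  have hne : {n | ∃ D : Set V, IsDominating G D ∧ D.ncard = n}.Nonempty :=
    ⟨(Set.univ : Set V).ncard, Set.univ,
      Set.eq_univ_of_forall (fun v => Or.inl (Set.mem_univ v)), rfl⟩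
  exact Nat.sInf_mem hne

lemma isolationNum_le {V : Type*} (G : SimpleGraph V) {A : Set V} (h : IsIsolating G A) :
    isolationNum G ≤ A.ncard :=
  Nat.sInf_le ⟨A, h, rfl⟩

lemma isolationNum_le_of_iso {V V' : Type*} {G : SimpleGraph V} {G' : SimpleGraph V'}
    (e : G ≃g G') : isolationNum G' ≤ isolationNum G := by
  refine le_csInf ⟨_, exists_iota_set G⟩ ?_
  rintro n ⟨A, hA, rfl⟩
  have hiso : IsIsolating G' (e '' A) := by
    have key : ∀ x : V', x ∉ closedNbhd G' (e '' A) → e.symm x ∉ closedNbhd G A := by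
      intro x hx hmem
      apply hx
      rcases hmem with hm | ⟨a, ha, hadj'⟩
      · exact Or.inl ⟨e.symm x, hm, by simp⟩
      · refine Or.inr ⟨e a, ⟨a, ha, rfl⟩, ?_⟩
        have h2 := e.map_adj_iff.mpr hadj'
        simpa using h2
    intro u hu v hv hadj
    exact hA _ (key u hu) _ (key v hv) (e.symm.map_adj_iff.mpr hadj)
  have : (e '' A).ncard = A.ncard := Set.ncard_image_of_injective A e.injective
  exact Nat.sInf_le ⟨e '' A, hiso, this⟩

lemma isolationNum_eq_of_iso {V V' : Type*} {G : SimpleGraph V} {G' : SimpleGraph V'}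
    (e : G ≃g G') : isolationNum G = isolationNum G' :=
  le_antisymm (isolationNum_le_of_iso e.symm) (isolationNum_le_of_iso e)

/-- Core construction: product of "fibers" `T u`. -/
lemma core_bound {V W : Type*} [Fintype V] [Fintype W] (G : SimpleGraph V) (H : SimpleGraph W)
    (S : Set V) (T : V → Set W)
    (hdom : ∀ u, u ∉ S → IsDominating H (T u))
    (hiso : ∀ u, u ∈ S → IsIsolating H (T u))
    (hadj : ∀ u v, u ∈ S → v ∈ S → G.Adj u v →
      leftoverSet H (T u) ∩ leftoverSet H (T v) = ∅) :
    isolationNum (G.boxProd H) ≤ ∑ u : V, (T u).ncard := by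
  classical
  set A : Set (V × W) := {p | p.2 ∈ T p.1} with hAdef
  -- every vertex outside N[A] has second coordinate in the leftover set of its fiber
  have hleft : ∀ p : V × W, p ∉ closedNbhd (G.boxProd H) A → p.2 ∈ leftoverSet H (T p.1) := by
    intro p hp
    intro hmem
    apply hp
    rcases hmem with hm | ⟨a, ha, hadj'⟩
    · exact Or.inl hm
    · exact Or.inr ⟨(p.1, a), ha, Or.inr ⟨hadj', rfl⟩⟩
  have hinS : ∀ p : V × W, p ∉ closedNbhd (G.boxProd H) A → p.1 ∈ S := by
    intro p hp
    by_contra hns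
    have := hleft p hp
    rw [leftoverSet, hdom p.1 hns] at this
    exact this (Set.mem_univ _)
  have hisolating : IsIsolating (G.boxProd H) A := by
    intro p hp q hq hpq
    have hpl := hleft p hp
    have hql := hleft q hq
    have hpS := hinS p hp
    have hqS := hinS q hq
    rcases hpq with ⟨hG, h2⟩ | ⟨hH, h1⟩
    · have hdisj := hadj p.1 q.1 hpS hqS hG
      have : p.2 ∈ leftoverSet H (T p.1) ∩ leftoverSet H (T q.1) := ⟨hpl, h2 ▸ hql⟩
      rw [hdisj] at this
      exact this
    · have := hiso p.1 hpS
      exact this p.2 hpl q.2 (h1 ▸ hql) hH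
  -- cardinality
  have hcard : A.ncard = ∑ u : V, (T u).ncard := by
    have h1 : A = ↑(Finset.univ.filter fun p : V × W => p.2 ∈ T p.1) := by
      ext p; simp [hAdef]
    rw [h1, Set.ncard_coe_finset, Finset.card_filter]
    rw [Fintype.sum_prod_type]
    congr 1
    ext u
    rw [← Finset.card_filter]
    rw [Set.ncard_eq_toFinset_card']
    congr 1
    ext w
    simp
  calc isolationNum (G.boxProd H) ≤ A.ncard := isolationNum_le _ hisolating
    _ = _ := hcard

lemma sum_T_card {V : Type*} [Fintype V] (S : Set V) [DecidablePred (· ∈ S)] (a b : ℕ) :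
    ∑ u : V, (if u ∈ S then a else b) = S.ncard * a + (Fintype.card V - S.ncard) * b := by
  classical
  rw [Finset.sum_ite]
  simp only [Finset.sum_const, smul_eq_mul]
  have h1 : Finset.univ.filter (· ∈ S) = S.toFinset := by ext; simp
  have h2 : (Finset.univ.filter (¬ · ∈ S)).card = Fintype.card V - S.ncard := by
    have := Finset.card_filter_add_card_filter_not (s := Finset.univ)
      (p := (· ∈ S))
    rw [h1, Finset.card_univ, ← Set.ncard_eq_toFinset_card'] at this
    omega
  rw [h1, h2, Set.ncard_eq_toFinset_card']

lemma one_side_bound {V W : Type*} [Fintype V] [Fintype W]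
    (G : SimpleGraph V) (H : SimpleGraph W) :
    isolationNum (G.boxProd H) ≤
      alphaK G (cliqueNumber (isolationGraph H)) * isolationNum H +
        (Fintype.card V - alphaK G (cliqueNumber (isolationGraph H))) * dominationNum H := by
  classical
  set k := cliqueNumber (isolationGraph H) with hk
  obtain ⟨D₀, hD₀, hD₀card⟩ := exists_dom_set H
  -- the alphaK defining set
  set P : Set ℕ := {n | ∃ S : Set V,
    (∃ c : V → Fin k, ∀ u ∈ S, ∀ v ∈ S, G.Adj u v → c u ≠ c v) ∧ S.ncard = n} with hP
  by_cases hPne : P.Nonempty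
  · -- attained alphaK
    have hPbdd : BddAbove P := by
      refine ⟨Fintype.card V, ?_⟩
      rintro n ⟨S, _, rfl⟩
      simpa [Set.ncard_univ, Nat.card_eq_fintype_card] using
        Set.ncard_le_ncard (Set.subset_univ S) (Set.toFinite _)
    obtain ⟨S, ⟨c, hc⟩, hScard⟩ : alphaK G k ∈ P := by
      rw [alphaK]; exact Nat.sSup_mem hPne hPbdd
    -- a clique of size k in the isolation graph
    have hfin : Finite (IotaSets W H) := by
      unfold IotaSets; exact Subtype.finite
    have hCne : {n | ∃ S : Set (IotaSets W H),
        (∀ u ∈ S, ∀ v ∈ S, u ≠ v → (isolationGraph H).Adj u v) ∧ S.ncard = n}.Nonempty :=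
      ⟨0, ∅, by simp, by simp⟩
    have hCbdd : BddAbove {n | ∃ S : Set (IotaSets W H),
        (∀ u ∈ S, ∀ v ∈ S, u ≠ v → (isolationGraph H).Adj u v) ∧ S.ncard = n} := by
      refine ⟨Nat.card (IotaSets W H), ?_⟩
      rintro n ⟨S, _, rfl⟩
      simpa [Set.ncard_univ, Nat.card_eq_fintype_card] using
        Set.ncard_le_ncard (Set.subset_univ S) (Set.toFinite _)
    obtain ⟨C, hCclique, hCcard⟩ : ∃ C : Set (IotaSets W H),
        (∀ u ∈ C, ∀ v ∈ C, u ≠ v → (isolationGraph H).Adj u v) ∧ C.ncard = k := by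
      have := Nat.sSup_mem hCne hCbdd
      rw [← cliqueNumber, ← hk] at this
      exact this
    have hCfin : C.Finite := Set.toFinite _
    have hCtf : hCfin.toFinset.card = k := by
      rw [← Set.ncard_eq_toFinset_card _ hCfin, hCcard]
    let e := hCfin.toFinset.equivFinOfCardEq hCtf
    let F : Fin k → IotaSets W H := fun i => (e.symm i).1
    have hFC : ∀ i, F i ∈ C := fun i => hCfin.mem_toFinset.mp (e.symm i).2
    have hFne : ∀ i j, i ≠ j → F i ≠ F j := by
      intro i j hij h
      exact hij (e.symm.injective (Subtype.ext h))
    set T : V → Set W := fun u => if u ∈ S then (F (c u)).1 else D₀ with hT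
    have h1 := core_bound G H S T
      (fun u hu => by simp only [hT, if_neg hu]; exact hD₀)
      (fun u hu => by simp only [hT, if_pos hu]; exact (F (c u)).2.1)
      (fun u v hu hv huv => by
        simp only [hT, if_pos hu, if_pos hv]
        exact And.right (hCclique _ (hFC (c u)) _ (hFC (c v))
          (hFne _ _ (hc u hu v hv huv))))
    have h2 : ∑ u : V, (T u).ncard =
        ∑ u : V, (if u ∈ S then isolationNum H else dominationNum H) := by
      apply Finset.sum_congr rfl
      intro u _
      simp only [hT]
      split_ifs with h
      · exact (F (c u)).2.2
      · exact hD₀card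
    rw [h2, sum_T_card, hScard] at h1
    exact h1
  · have hzero : alphaK G k = 0 := by
      rw [alphaK, ← hP, Set.not_nonempty_iff_eq_empty.mp hPne, csSup_empty]
      rfl
    have h1 := core_bound G H ∅ (fun _ => D₀)
      (fun u _ => hD₀) (fun u hu => absurd hu (Set.notMem_empty u))
      (fun u v hu => absurd hu (Set.notMem_empty u))
    rw [hzero]
    simp only [zero_mul, Nat.sub_zero, zero_add]
    calc isolationNum (G.boxProd H) ≤ ∑ _u : V, D₀.ncard := h1
      _ = Fintype.card V * dominationNum H := by
          rw [Finset.sum_const, hD₀card, smul_eq_mul, Finset.card_univ]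

theorem isolation_boxProd_le_isolationGraph_bound
    {V W : Type*} [Fintype V] [Fintype W] (G : SimpleGraph V) (H : SimpleGraph W)
    (k l : ℕ) (hk : k = cliqueNumber (isolationGraph H)) (hl : l = cliqueNumber (isolationGraph G)) :
    isolationNum (G.boxProd H) ≤
      min (alphaK G k * isolationNum H + (Fintype.card V - alphaK G k) * dominationNum H)
        (alphaK H l * isolationNum G + (Fintype.card W - alphaK H l) * dominationNum G) := by
  refine le_min ?_ ?_
  · rw [hk]; exact one_side_bound G H
  · rw [hl, isolationNum_eq_of_iso (SimpleGraph.boxProdComm G H)]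
    exact one_side_bound H G
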